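/- Let C be a regular category with enough projectives such that the projective objects are closed under finite limits. If P is a projective object of C, then the image y(P) of P under the embedding y : C → C_{ex/reg} into the ex/reg-completion is projective in C_{ex/reg}. -/

import Mathlib

open CategoryTheory CategoryTheory.Limits

universe v u v₂ u₂

/-- A morphism is a cover if the only subobject of its codomain through which
it factors is the maximal one. -/
def IsCover {C : Type u} [Category.{v} C] {X Y : C} (f : Y ⟶ X) : Prop :=
  ∀ ⦃Z : C⦄ (m : Z ⟶ X) (g : Y ⟶ Z), Mono m → g ≫ m = f → IsIso m

/-- An object is projective (w.r.t. covers) if every cover onto it splits. -/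
def CovProjective {C : Type u} [Category.{v} C] (P : C) : Prop :=
  ∀ ⦃X : C⦄ (q : X ⟶ P), IsCover q → ∃ s : P ⟶ X, s ≫ q = 𝟙 P

/-- A category has enough projectives if every object is covered by a projective. -/
def HasEnoughCovProjectives (C : Type u) [Category.{v} C] : Prop :=
  ∀ X : C, ∃ (P : C) (q : P ⟶ X), CovProjective P ∧ IsCover q

/-- A regular category: finite limits, cover-mono factorizations,
and covers stable under pullback. -/
class RegularCat (C : Type u) [Category.{v} C] extends HasFiniteLimits C : Prop where
  factor : ∀ {X Y : C} (f : X ⟶ Y), ∃ (Z : C) (e : X ⟶ Z) (m : Z ⟶ Y),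
    IsCover e ∧ Mono m ∧ e ≫ m = f
  pullback_cover : ∀ {X Y Z L : C} (f : X ⟶ Y) (g : Z ⟶ Y)
    (p₁ : L ⟶ X) (p₂ : L ⟶ Z), IsPullback p₁ p₂ f g → IsCover f → IsCover p₂
section Exactness

variable {C : Type u} [Category.{v} C]

/-- The relation on generalized elements induced by a relation r : R ⟶ X ⨯ X. -/
def relOf [HasFiniteLimits C] {R X : C} (r : R ⟶ X ⨯ X) {A : C} (x y : A ⟶ X) : Prop :=
  ∃ a : A ⟶ R, a ≫ r = prod.lift x y

/-- r : R ⟶ X ⨯ X is an equivalence relation: it is a subobject of X ⨯ X and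
induces an equivalence relation on every hom-set Hom(A, X). -/
structure IsEquivRel [HasFiniteLimits C] {R X : C} (r : R ⟶ X ⨯ X) : Prop where
  mono : Mono r
  iseqv : ∀ A : C, Equivalence (fun x y : A ⟶ X => relOf r x y)

/-- The fork r₀, r₁ ⇉ X → Q is exact: it is both a pullback and a coequalizer. -/
structure IsExactFork {R X Q : C} (r₀ r₁ : R ⟶ X) (q : X ⟶ Q) : Prop where
  w : r₀ ≫ q = r₁ ≫ q
  isPullback : IsPullback r₀ r₁ q q
  isCoequalizer : Nonempty (IsColimit (Cofork.ofπ q w))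

/-- The fork is stably exact: it is exact and remains exact after pullback
along any map P ⟶ Q. -/
def IsStablyExactFork [HasFiniteLimits C] {R X Q : C} (r₀ r₁ : R ⟶ X) (q : X ⟶ Q) : Prop :=
  ∃ w : r₀ ≫ q = r₁ ≫ q, Nonempty (IsColimit (Cofork.ofπ q w)) ∧ IsPullback r₀ r₁ q q ∧
    ∀ {P : C} (p : P ⟶ Q),
      IsExactFork
        (pullback.lift (pullback.fst (r₀ ≫ q) p ≫ r₀) (pullback.snd (r₀ ≫ q) p)
          (by simpa using pullback.condition) :
            pullback (r₀ ≫ q) p ⟶ pullback q p)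
        (pullback.lift (pullback.fst (r₀ ≫ q) p ≫ r₁) (pullback.snd (r₀ ≫ q) p)
          (by rw [Category.assoc, ← w]; simpa using pullback.condition))
        (pullback.snd q p)

/-- An exact category: regular, and every equivalence relation fits into a
stably exact fork. -/
class ExactCat (C : Type u) [Category.{v} C] extends RegularCat C : Prop where
  exact_quotient : ∀ {R X : C} (r : R ⟶ X ⨯ X), IsEquivRel r →
    ∃ (Q : C) (q : X ⟶ Q), IsStablyExactFork (r ≫ prod.fst) (r ≫ prod.snd) q

end Exactness


section Aux

variable {E : Type u₂} [Category.{v₂} E]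

/-- Composition of covers is a cover, in a category with pullbacks. -/
lemma isCover_comp [HasPullbacks E] {X Y W : E} {e : Y ⟶ X} {f : X ⟶ W}
    (he : IsCover e) (hf : IsCover f) : IsCover (e ≫ f) := by
  intro Z m g hm hgm
  haveI : Mono m := hm
  have h1 : IsIso (pullback.fst f m) := by
    refine he (pullback.fst f m) (pullback.lift e g hgm.symm) inferInstance ?_
    exact pullback.lift_fst _ _ _
  refine hf m (inv (pullback.fst f m) ≫ pullback.snd f m) hm ?_
  rw [Category.assoc, ← pullback.condition, IsIso.inv_hom_id_assoc]

end Aux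

/-- If C is regular with enough projectives closed under finite limits, and
y : C ⥤ D exhibits the exact category D as the ex/reg-completion of C
(y is regular, full and faithful, covering, and full on subobjects), then
y sends projectives to projectives. -/
theorem exRegCompletion_preserves_projectives
    {C : Type u} [Category.{v} C] {D : Type u₂} [Category.{v₂} D]
    [RegularCat C] [ExactCat D]
    (hep : HasEnoughCovProjectives C)
    (hprojlim : ∀ (J : Type) [SmallCategory J] [FinCategory J] (F : J ⥤ C),
      (∀ j : J, CovProjective (F.obj j)) → CovProjective (limit F))
    (y : C ⥤ D) [y.Full] [y.Faithful]
    (hlex : PreservesFiniteLimits y)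
    (hcov : ∀ {X Y : C} (f : Y ⟶ X), IsCover f → IsCover (y.map f))
    (hcovering : ∀ Z : D, ∃ (A : C) (c : y.obj A ⟶ Z), IsCover c)
    (hfullsub : ∀ (A : C) (S : D) (m : S ⟶ y.obj A), Mono m →
      ∃ (B : C) (n : B ⟶ A), Mono n ∧ ∃ e : y.obj B ≅ S, e.hom ≫ m = y.map n)
    (P : C) (hP : CovProjective P) : CovProjective (y.obj P) := by
  intro X q hq
  obtain ⟨A, c, hc⟩ := hcovering X
  have hcq : IsCover (c ≫ q) := isCover_comp hc hq
  set f := y.preimage (c ≫ q) with hfdef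
  have hyf : y.map f = c ≫ q := y.map_preimage _
  have hf : IsCover f := by
    intro Z m g hm hgm
    haveI : Mono m := hm
    haveI : Mono (y.map m) := by
      haveI := hlex.preservesFiniteLimits
      exact y.map_mono m
    have : IsIso (y.map m) := by
      refine hcq (y.map m) (y.map g) inferInstance ?_
      rw [← y.map_comp, hgm, hyf]
    exact isIso_of_reflects_iso m y
  obtain ⟨s, hs⟩ := hP f hf
  refine ⟨y.map s ≫ c, ?_⟩
  rw [Category.assoc, ← hyf, ← y.map_comp, hs, y.map_id]
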